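/- In ℚ[c₁,c₂,c₃], the ideal generated by −2c₁, 2c₁², and −2c₃ + 2c₁c₂ − 2c₁³ equals the ideal (c₁, c₃), and the quotient ring ℚ[c₁,c₂,c₃]/(c₁, c₃) is isomorphic to the polynomial ring ℚ[X] in one variable. -/

import Mathlib

noncomputable section

abbrev R3 : Type := MvPolynomial (Fin 3) ℚ

noncomputable def cc (i : Fin 3) : R3 := MvPolynomial.X i

theorem stmt_4 :
    (Ideal.span {(-2 * cc 0 : R3), (2 * cc 0 ^ 2 : R3),
        (-2 * cc 2 + 2 * (cc 0 * cc 1) - 2 * cc 0 ^ 3 : R3)}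
      = Ideal.span {cc 0, cc 2}) ∧
    Nonempty ((R3 ⧸ Ideal.span {(cc 0 : R3), cc 2}) ≃+* Polynomial ℚ) := by
  have h : (MvPolynomial.C (-(1/2) : ℚ) : R3) * (-2) = 1 := by
    rw [← map_ofNat (MvPolynomial.C : ℚ →+* R3) 2, ← map_neg, ← map_mul]
    norm_num
  constructor
  · apply le_antisymm
    · rw [Ideal.span_le]
      intro x hx
      simp only [Set.mem_insert_iff, Set.mem_singleton_iff] at hx
      rcases hx with rfl | rfl | rfl
      · exact Ideal.mem_span_pair.2 ⟨-2, 0, by ring⟩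
      · exact Ideal.mem_span_pair.2 ⟨2 * cc 0, 0, by ring⟩
      · exact Ideal.mem_span_pair.2 ⟨2 * cc 1 - 2 * cc 0 ^ 2, -2, by ring⟩
    · rw [Ideal.span_le]
      intro x hx
      simp only [Set.mem_insert_iff, Set.mem_singleton_iff] at hx
      rcases hx with rfl | rfl
      · exact Ideal.mem_span_insert.2 ⟨MvPolynomial.C (-(1/2) : ℚ), 0, Ideal.zero_mem _,
          by linear_combination (-(cc 0)) * h⟩
      · refine Ideal.mem_span_insert.2 ⟨MvPolynomial.C (-(1/2) : ℚ) * (cc 1 - cc 0 ^ 2),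
          cc 2 - cc 0 * cc 1 + cc 0 ^ 3, ?_, by
            linear_combination (-((cc 1 - cc 0 ^ 2) * cc 0)) * h⟩
        exact Ideal.mem_span_pair.2 ⟨0, MvPolynomial.C (-(1/2) : ℚ), by
          linear_combination (cc 2 - cc 0 * cc 1 + cc 0 ^ 3) * h⟩
  · set I : Ideal R3 := Ideal.span {cc 0, cc 2} with hI
    have h0 : (cc 0 : R3) ∈ I := Ideal.subset_span (by simp)
    have h2 : (cc 2 : R3) ∈ I := Ideal.subset_span (by simp)
    let φ : R3 →+* Polynomial ℚ :=
      (MvPolynomial.aeval ![0, Polynomial.X, 0]).toRingHom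
    have hker : I ≤ RingHom.ker φ := by
      rw [hI, Ideal.span_le]
      intro x hx
      simp only [Set.mem_insert_iff, Set.mem_singleton_iff] at hx
      rcases hx with rfl | rfl <;>
        simp [φ, RingHom.mem_ker, cc]
    let φ' : R3 ⧸ I →+* Polynomial ℚ := Ideal.Quotient.lift I φ hker
    let ψ : Polynomial ℚ →+* R3 ⧸ I :=
      (Polynomial.aeval (Ideal.Quotient.mk I (cc 1))).toRingHom
    refine ⟨RingEquiv.ofRingHom φ' ψ ?_ ?_⟩
    · apply Polynomial.ringHom_ext
      · intro a; simp [φ', ψ, φ, cc]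
      · simp [φ', ψ, φ, cc]
    · rw [← RingHom.cancel_right (Ideal.Quotient.mk_surjective (I := I))]
      apply MvPolynomial.ringHom_ext
      · intro a
        simp only [RingHom.comp_apply, RingHom.id_apply]
        rw [show φ' (Ideal.Quotient.mk I (MvPolynomial.C a)) = φ (MvPolynomial.C a) from
          Ideal.Quotient.lift_mk _ _ _]
        simp only [φ', ψ, φ, AlgHom.toRingHom_eq_coe, RingHom.coe_coe,
          MvPolynomial.aeval_C, Polynomial.algebraMap_eq, Polynomial.aeval_C]
        rw [IsScalarTower.algebraMap_apply ℚ R3 (R3 ⧸ I), Ideal.Quotient.algebraMap_eq,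
          MvPolynomial.algebraMap_eq]
      · intro i
        fin_cases i
        · simpa [φ', ψ, φ, cc] using (Ideal.Quotient.eq_zero_iff_mem.2 h0).symm
        · simp [φ', ψ, φ, cc]
        · simpa [φ', ψ, φ, cc] using (Ideal.Quotient.eq_zero_iff_mem.2 h2).symm
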